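/- For every t ∈ ℝ one has |g(t)| ≤ (2α)^{1/(2Nα)} |t|^{1/(2α)} (property (g_6) of Lemma 2.1). -/

import Mathlib

open Real Filter Set

theorem g_six (N : ℕ) (hN : 2 ≤ N) (α : ℝ) (hα : 1 / 2 < α)
    (g : ℝ → ℝ) (hg_diff : Differentiable ℝ g) (hg_zero : g 0 = 0)
    (hg_odd : ∀ t : ℝ, g (-t) = -g t)
    (hg_deriv : ∀ t : ℝ, deriv g t =
      (1 + (2 * α) ^ ((N : ℝ) - 1) * |g t| ^ ((N : ℝ) * (2 * α - 1))) ^ (-(1 / (N : ℝ))))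
    : ∀ t : ℝ, |g t| ≤ (2 * α) ^ (1 / (2 * (N : ℝ) * α)) * |t| ^ (1 / (2 * α)) := by
  have hNpos : (0 : ℝ) < (N : ℝ) := by positivity
  have hNne : (N : ℝ) ≠ 0 := ne_of_gt hNpos
  have hT : (1 : ℝ) < 2 * α := by linarith
  have hTpos : (0 : ℝ) < 2 * α := by linarith
  -- g is strictly monotone
  have hbase : ∀ t : ℝ, (0 : ℝ) <
      1 + (2 * α) ^ ((N : ℝ) - 1) * |g t| ^ ((N : ℝ) * (2 * α - 1)) := by
    intro t
    have h1 : (0 : ℝ) ≤ (2 * α) ^ ((N : ℝ) - 1) := Real.rpow_nonneg hTpos.le _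
    have h2 : (0 : ℝ) ≤ |g t| ^ ((N : ℝ) * (2 * α - 1)) := Real.rpow_nonneg (abs_nonneg _) _
    nlinarith
  have hderiv_pos : ∀ t : ℝ, 0 < deriv g t := by
    intro t
    rw [hg_deriv t]
    exact Real.rpow_pos_of_pos (hbase t) _
  have hmono : StrictMono g := strictMono_of_deriv_pos hderiv_pos
  have hg_nonneg : ∀ t : ℝ, 0 ≤ t → 0 ≤ g t := by
    intro t ht
    rw [← hg_zero]
    exact hmono.monotone ht
  -- key claim for t ≥ 0
  have key : ∀ t : ℝ, 0 ≤ t → g t ≤ (2 * α) ^ (1 / (2 * (N : ℝ) * α)) * t ^ (1 / (2 * α)) := by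
    intro t ht
    set C : ℝ := (2 * α) ^ ((N : ℝ)⁻¹) with hC
    have hCpos : 0 < C := Real.rpow_pos_of_pos hTpos _
    set ψ : ℝ → ℝ := fun s => g s ^ (2 * α) with hψ
    have hψderiv : ∀ s : ℝ, HasDerivAt ψ (2 * α * g s ^ (2 * α - 1) * deriv g s) s := by
      intro s
      have h1 : HasDerivAt (fun x : ℝ => x ^ (2 * α)) (2 * α * g s ^ (2 * α - 1)) (g s) :=
        Real.hasDerivAt_rpow_const (Or.inr hT.le)
      exact h1.comp s (hg_diff s).hasDerivAt
    set f : ℝ → ℝ := fun s => C * s - ψ s with hf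
    have hfderiv : ∀ s : ℝ, HasDerivAt f (C - 2 * α * g s ^ (2 * α - 1) * deriv g s) s := by
      intro s
      have h := ((hasDerivAt_id s).const_mul C).sub (hψderiv s)
      rw [mul_one] at h
      exact h
    -- the derivative bound on Ioi 0
    have hbound : ∀ s : ℝ, 0 < s → 2 * α * g s ^ (2 * α - 1) * deriv g s ≤ C := by
      intro s hs
      have hx : 0 < g s := by rw [← hg_zero]; exact hmono hs
      have habs : |g s| = g s := abs_of_pos hx
      set A : ℝ := (2 * α) ^ ((N : ℝ) - 1) * g s ^ ((N : ℝ) * (2 * α - 1)) with hA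
      have hApos : 0 < A := by
        exact mul_pos (Real.rpow_pos_of_pos hTpos _) (Real.rpow_pos_of_pos hx _)
      have hstep : deriv g s ≤ A ^ (-(1 / (N : ℝ))) := by
        rw [hg_deriv s, habs, ← hA]
        exact Real.rpow_le_rpow_of_nonpos hApos (by linarith)
          (neg_nonpos.mpr (by positivity))
      have hAval : A ^ (-(1 / (N : ℝ))) =
          (2 * α) ^ (-(((N : ℝ) - 1) / (N : ℝ))) * g s ^ (-(2 * α - 1)) := by
        rw [hA, Real.mul_rpow (Real.rpow_nonneg hTpos.le _) (Real.rpow_nonneg hx.le _),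
          ← Real.rpow_mul hTpos.le, ← Real.rpow_mul hx.le]
        congr 1
        · congr 1; field_simp
        · congr 1; field_simp
      have hfinal : 2 * α * g s ^ (2 * α - 1) * A ^ (-(1 / (N : ℝ))) = C := by
        rw [hAval, hC]
        have h1 : g s ^ (2 * α - 1) * g s ^ (-(2 * α - 1)) = 1 := by
          rw [← Real.rpow_add hx]; simp
        have h2 : (2 : ℝ) * α * (2 * α) ^ (-(((N : ℝ) - 1) / (N : ℝ)))
            = (2 * α) ^ ((N : ℝ)⁻¹) := by
          nth_rewrite 1 [← Real.rpow_one (2 * α)]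
          rw [← Real.rpow_add hTpos]
          congr 1
          field_simp
          ring
        calc 2 * α * g s ^ (2 * α - 1) *
              ((2 * α) ^ (-(((N : ℝ) - 1) / (N : ℝ))) * g s ^ (-(2 * α - 1)))
            = (2 * α * (2 * α) ^ (-(((N : ℝ) - 1) / (N : ℝ)))) *
              (g s ^ (2 * α - 1) * g s ^ (-(2 * α - 1))) := by ring
          _ = (2 * α) ^ ((N : ℝ)⁻¹) := by rw [h1, h2, mul_one]
      calc 2 * α * g s ^ (2 * α - 1) * deriv g s
          ≤ 2 * α * g s ^ (2 * α - 1) * A ^ (-(1 / (N : ℝ))) := by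
            apply mul_le_mul_of_nonneg_left hstep
            positivity
        _ = C := hfinal
    -- monotonicity of f on Ici 0
    have hfmono : MonotoneOn f (Ici (0 : ℝ)) := by
      apply monotoneOn_of_deriv_nonneg (convex_Ici 0)
      · exact fun s _ => ((hfderiv s).continuousAt).continuousWithinAt
      · intro s hs
        exact ((hfderiv s).differentiableAt).differentiableWithinAt
      · intro s hs
        rw [interior_Ici] at hs
        rw [(hfderiv s).deriv]
        have := hbound s hs
        linarith
    have hf0 : f 0 = 0 := by
      simp [hf, hψ, hg_zero, Real.zero_rpow (by positivity : 2 * α ≠ 0)]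
    have hft : 0 ≤ f t := by
      rw [← hf0]
      exact hfmono (self_mem_Ici) ht ht
    have hψt : ψ t ≤ C * t := by simpa [hf] using hft
    -- conclude
    have h1 : (ψ t) ^ (1 / (2 * α)) ≤ (C * t) ^ (1 / (2 * α)) :=
      Real.rpow_le_rpow (Real.rpow_nonneg (hg_nonneg t ht) _) hψt (by positivity)
    have h2 : (ψ t) ^ (1 / (2 * α)) = g t := by
      rw [hψ]
      rw [← Real.rpow_mul (hg_nonneg t ht)]
      rw [mul_one_div, div_self (by positivity : 2 * α ≠ 0), Real.rpow_one]
    have h3 : (C * t) ^ (1 / (2 * α)) =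
        (2 * α) ^ (1 / (2 * (N : ℝ) * α)) * t ^ (1 / (2 * α)) := by
      rw [Real.mul_rpow hCpos.le ht, hC, ← Real.rpow_mul hTpos.le]
      congr 2
      field_simp
    rw [h2, h3] at h1
    exact h1
  intro t
  rcases le_or_gt 0 t with ht | ht
  · rw [abs_of_nonneg (hg_nonneg t ht), abs_of_nonneg ht]
    exact key t ht
  · have h1 : |g t| = g (-t) := by
      rw [hg_odd t] at *
      have : g (-t) = -g t := hg_odd t
      rw [this] at *
      have hgneg : g t ≤ 0 := by
        rw [← hg_zero]; exact hmono.monotone ht.le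
      rw [abs_of_nonpos hgneg, this]
    rw [h1, abs_of_neg ht]
    exact key (-t) (by linarith)
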